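/- For every natural number m ≥ 2 and every real α with 0 < α < π, the sequence (1/n^m) · Σ_{k=0}^{n−1} cot^m((α + kπ)/n) converges, as n → ∞, to P_{m−1}(cot α)/(m−1)!. -/

import Mathlib

open Filter

/-- The derivative polynomials of the tangent function:
`P 0 = X`, `P (n+1) = (1 + X²) · (P n)'`. -/
noncomputable def P : ℕ → Polynomial ℝ
  | 0 => Polynomial.X
  | n + 1 => (1 + Polynomial.X ^ 2) * Polynomial.derivative (P n)

set_option maxHeartbeats 1000000

lemma P_deg_coeff (j : ℕ) :
    (P j).natDegree ≤ j + 1 ∧ (P j).coeff (j + 1) = (Nat.factorial j : ℝ) := by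
  induction j with
  | zero => simp [P]
  | succ j ih =>
    obtain ⟨hd, hc⟩ := ih
    have hdD : (Polynomial.derivative (P j)).natDegree ≤ j :=
      le_trans (Polynomial.natDegree_derivative_le _) (by omega)
    constructor
    · calc (P (j+1)).natDegree ≤ (1 + Polynomial.X ^ 2 : Polynomial ℝ).natDegree
            + (Polynomial.derivative (P j)).natDegree := Polynomial.natDegree_mul_le
      _ ≤ 2 + j := by
          gcongr
          exact le_trans (Polynomial.natDegree_add_le _ _) (by simp)
      _ = j + 1 + 1 := by ring
    · have : (P (j+1)) = Polynomial.derivative (P j)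
          + Polynomial.X ^ 2 * Polynomial.derivative (P j) := by
        show (1 + Polynomial.X ^ 2) * _ = _
        ring
      rw [this, Polynomial.coeff_add, Polynomial.coeff_X_pow_mul]
      have h1 : (Polynomial.derivative (P j)).coeff (j + 1 + 1) = 0 :=
        Polynomial.coeff_eq_zero_of_natDegree_lt (by omega)
      have h2 : (Polynomial.derivative (P j)).coeff j = (P j).coeff (j+1) * (j+1) :=
        Polynomial.coeff_derivative _ _
      rw [h1, h2, hc, Nat.factorial_succ]
      push_cast
      ring

lemma hasDerivAt_cot {y : ℝ} (h : Real.sin y ≠ 0) :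
    HasDerivAt Real.cot (-(1 + Real.cot y ^ 2)) y := by
  have := (Real.hasDerivAt_cos y).div (Real.hasDerivAt_sin y) h
  have heq : (-Real.sin y * Real.sin y - Real.cos y * Real.cos y) / Real.sin y ^ 2
      = -(1 + Real.cot y ^ 2) := by
    rw [Real.cot_eq_cos_div_sin]
    field_simp
    nlinarith [Real.sin_sq_add_cos_sq y]
  rw [heq] at this
  exact this.congr_of_eventuallyEq
    (Filter.Eventually.of_forall fun x => Real.cot_eq_cos_div_sin x)

lemma hasDerivAt_P_cot (j : ℕ) {y : ℝ} (h : Real.sin y ≠ 0) :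
    HasDerivAt (fun y => (P (j)).eval (Real.cot y)) (-(P (j+1)).eval (Real.cot y)) y := by
  have hp := (P j).hasDerivAt (Real.cot y)
  have := hp.comp y (hasDerivAt_cot h)
  refine this.congr_deriv ?_
  rw [show P (j+1) = (1 + Polynomial.X ^ 2) * Polynomial.derivative (P j) from rfl]
  simp only [Polynomial.eval_mul, Polynomial.eval_add, Polynomial.eval_one,
    Polynomial.eval_pow, Polynomial.eval_X]
  ring

set_option maxHeartbeats 1000000

open Complex in
lemma exp_two_I_ne_one {x : ℝ} (h0 : 0 < x) (hπ : x < Real.pi) :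
    Complex.exp (2 * I * x) ≠ 1 := by
  intro hone
  rw [Complex.exp_eq_one_iff] at hone
  obtain ⟨k, hk⟩ := hone
  have : (x : ℂ) = (k : ℤ) * (Real.pi : ℝ) := by
    have hI : (2 : ℂ) * I ≠ 0 := by simp [Complex.I_ne_zero]
    have : (2:ℂ) * I * x = 2 * I * (k * Real.pi) := by rw [hk]; push_cast; ring
    exact mul_left_cancel₀ hI this
  have hx : x = (k : ℝ) * Real.pi := by exact_mod_cast this
  rcases lt_trichotomy k 0 with h | h | h
  · have hk1 : (k:ℝ) ≤ -1 := by exact_mod_cast (show k ≤ -1 by omega)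
    nlinarith [Real.pi_pos, mul_le_mul_of_nonneg_right hk1 Real.pi_pos.le]
  · rw [h] at hx; simp at hx; nlinarith
  · have : (1 : ℝ) * Real.pi ≤ (k:ℝ) * Real.pi := by
      apply mul_le_mul_of_nonneg_right _ Real.pi_pos.le
      exact_mod_cast h
    nlinarith


lemma key_geom (n : ℕ) (hn : 0 < n) (c u z₀ : ℂ) (hu : u ^ n = 1) (hc : c ^ n = z₀)
    (huj : ∀ j, 0 < j → j < n → u ^ j ≠ 1) (hz₀ : 1 - z₀ ≠ 0)
    (hw : ∀ k < n, 1 - c * u ^ k ≠ 0) :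
    ∑ k ∈ Finset.range n, 1 / (1 - c * u ^ k) = n / (1 - z₀) := by
  have hterm : ∀ k ∈ Finset.range n,
      1 / (1 - c * u ^ k) = (∑ j ∈ Finset.range n, (c * u ^ k) ^ j) / (1 - z₀) := by
    intro k hk
    rw [Finset.mem_range] at hk
    have hgeom : (∑ j ∈ Finset.range n, (c * u ^ k) ^ j) * ((c * u ^ k) - 1)
        = (c * u ^ k) ^ n - 1 := geom_sum_mul _ _
    have hwn : (c * u ^ k) ^ n = z₀ := by
      rw [mul_pow, ← pow_mul, mul_comm k n, pow_mul, hu, one_pow, mul_one, hc]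
    rw [hwn] at hgeom
    rw [one_div, eq_div_iff hz₀, inv_mul_eq_div, div_eq_iff (hw k hk)]
    linear_combination hgeom
  rw [Finset.sum_congr rfl hterm, ← Finset.sum_div]
  congr 1
  rw [Finset.sum_comm]
  have hinner : ∀ j ∈ Finset.range n, ∑ k ∈ Finset.range n, (c * u ^ k) ^ j
      = if j = 0 then (n : ℂ) else 0 := by
    intro j hj
    rw [Finset.mem_range] at hj
    rcases Nat.eq_zero_or_pos j with h | h
    · simp [h]
    · rw [if_neg h.ne']
      calc ∑ k ∈ Finset.range n, (c * u ^ k) ^ j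
          = ∑ k ∈ Finset.range n, c ^ j * (u ^ j) ^ k := by
            apply Finset.sum_congr rfl
            intro k _
            rw [mul_pow, ← pow_mul, mul_comm k j, pow_mul]
        _ = c ^ j * ∑ k ∈ Finset.range n, (u ^ j) ^ k := by rw [Finset.mul_sum]
        _ = 0 := by
            rw [geom_sum_eq (huj j h hj), ← pow_mul, mul_comm j n, pow_mul, hu, one_pow]
            simp
  rw [Finset.sum_congr rfl hinner]
  simp only [Finset.sum_ite_eq', Finset.mem_range]
  rw [if_pos hn]

open Complex in
lemma cot_sum_base (n : ℕ) (hn : 0 < n) (β : ℝ) (h0 : 0 < β) (hπ : β < Real.pi) :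
    ∑ k ∈ Finset.range n, Real.cot ((β + k * Real.pi) / n) = n * Real.cot β := by
  have hnp : (0:ℝ) < n := by exact_mod_cast hn
  have hnC : (n : ℂ) ≠ 0 := by exact_mod_cast hn.ne'
  have hx : ∀ k < n, 0 < (β + k * Real.pi) / n ∧ (β + k * Real.pi) / n < Real.pi := by
    intro k hk
    constructor
    · apply div_pos _ hnp
      positivity
    · rw [div_lt_iff₀ hnp]
      have hk' : (k : ℝ) ≤ (n : ℝ) - 1 := by
        have : (k:ℝ) + 1 ≤ n := by exact_mod_cast hk
        linarith
      nlinarith [Real.pi_pos]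
  have hwcu : ∀ k : ℕ, Complex.exp (2 * I * (((β + k * Real.pi) / n : ℝ) : ℂ))
      = Complex.exp (2 * I * β / n) * Complex.exp (2 * Real.pi * I / n) ^ k := by
    intro k
    rw [← Complex.exp_nat_mul, ← Complex.exp_add]
    congr 1
    push_cast
    ring
  have hu : Complex.exp (2 * Real.pi * I / n) ^ n = 1 := by
    rw [← Complex.exp_nat_mul,
      show (n:ℂ) * (2 * Real.pi * I / n) = 2 * Real.pi * I by field_simp]
    exact Complex.exp_two_pi_mul_I
  have hc : Complex.exp (2 * I * β / n) ^ n = Complex.exp (2 * I * β) := by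
    rw [← Complex.exp_nat_mul]
    congr 1
    field_simp
  have huj : ∀ j, 0 < j → j < n → Complex.exp (2 * Real.pi * I / n) ^ j ≠ 1 := by
    intro j hj hjn
    have hrw : Complex.exp (2 * Real.pi * I / n) ^ j
        = Complex.exp (2 * I * ((Real.pi * j / n : ℝ) : ℂ)) := by
      rw [← Complex.exp_nat_mul]
      congr 1
      push_cast
      ring
    rw [hrw]
    apply exp_two_I_ne_one
    · have : (0:ℝ) < j := by exact_mod_cast hj
      positivity
    · rw [div_lt_iff₀ hnp]
      have : (j:ℝ) < n := by exact_mod_cast hjn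
      nlinarith [Real.pi_pos]
  have hz₀ : (1 : ℂ) - Complex.exp (2 * I * β) ≠ 0 := by
    intro h
    exact exp_two_I_ne_one h0 hπ (by linear_combination -h)
  have hw : ∀ k < n, (1:ℂ) - Complex.exp (2 * I * β / n)
      * Complex.exp (2 * Real.pi * I / n) ^ k ≠ 0 := by
    intro k hk h
    rw [← hwcu] at h
    exact exp_two_I_ne_one (hx k hk).1 (hx k hk).2 (by linear_combination -h)
  have hS := key_geom n hn _ _ _ hu hc huj hz₀ hw
  -- rewrite each cotangent
  have hcot : ∀ k ∈ Finset.range n,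
      Complex.cot (((β:ℂ) + (k:ℂ) * (Real.pi:ℂ)) / (n:ℂ))
      = (2 * (1 / (1 - Complex.exp (2 * I * β / n)
          * Complex.exp (2 * Real.pi * I / n) ^ k)) - 1) / I := by
    intro k hk
    rw [Finset.mem_range] at hk
    rw [Complex.cot_eq_exp_ratio,
      show 2 * I * (((β:ℂ) + (k:ℂ) * (Real.pi:ℂ)) / (n:ℂ))
        = 2 * I * (((β + k * Real.pi) / n : ℝ) : ℂ) by push_cast; ring,
      hwcu k]
    have hA := hw k hk
    generalize Complex.exp (2 * I * β / n) * Complex.exp (2 * Real.pi * I / n) ^ k = w at hA ⊢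
    have hB : w - 1 ≠ 0 := fun h => hA (by linear_combination -h)
    field_simp
    ring
  have hC : ((∑ k ∈ Finset.range n, Real.cot ((β + k * Real.pi) / n) : ℝ) : ℂ)
      = ((n * Real.cot β : ℝ) : ℂ) := by
    push_cast
    rw [Finset.sum_congr rfl hcot, ← Finset.sum_div,
      Finset.sum_sub_distrib, ← Finset.mul_sum, hS, Finset.sum_const,
      Finset.card_range, nsmul_eq_mul, mul_one, Complex.cot_eq_exp_ratio]
    field_simp
    ring
  exact_mod_cast hC

lemma xk_bounds {n k : ℕ} (hn : 0 < n) (hk : k < n) {β : ℝ} (h0 : 0 < β)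
    (hπ : β < Real.pi) :
    0 < (β + k * Real.pi) / n ∧ (β + k * Real.pi) / n < Real.pi := by
  have hnp : (0:ℝ) < n := by exact_mod_cast hn
  constructor
  · apply div_pos _ hnp
    positivity
  · rw [div_lt_iff₀ hnp]
    have hk' : (k : ℝ) ≤ (n : ℝ) - 1 := by
      have : (k:ℝ) + 1 ≤ n := by exact_mod_cast hk
      linarith
    nlinarith [Real.pi_pos]

lemma sin_xk_ne {n k : ℕ} (hn : 0 < n) (hk : k < n) {β : ℝ} (h0 : 0 < β)
    (hπ : β < Real.pi) : Real.sin ((β + k * Real.pi) / n) ≠ 0 :=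
  (Real.sin_pos_of_pos_of_lt_pi (xk_bounds hn hk h0 hπ).1
    (xk_bounds hn hk h0 hπ).2).ne'

lemma keyC (n : ℕ) (hn : 0 < n) (j : ℕ) :
    ∀ β : ℝ, 0 < β → β < Real.pi →
      ∑ k ∈ Finset.range n, (P j).eval (Real.cot ((β + k * Real.pi) / n))
        = (n:ℝ) ^ (j+1) * (P j).eval (Real.cot β) := by
  induction j with
  | zero =>
    intro β h0 hπ
    simpa [P] using cot_sum_base n hn β h0 hπ
  | succ j ih =>
    intro β h0 hπ
    have hnp : (0:ℝ) < n := by exact_mod_cast hn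
    have hsin : Real.sin β ≠ 0 := (Real.sin_pos_of_pos_of_lt_pi h0 hπ).ne'
    have hF : HasDerivAt
        (fun b => ∑ k ∈ Finset.range n, (P j).eval (Real.cot ((b + k * Real.pi) / n)))
        (∑ k ∈ Finset.range n,
          -(P (j+1)).eval (Real.cot ((β + k * Real.pi) / n)) * (1/(n:ℝ))) β := by
      apply HasDerivAt.fun_sum
      intro k hk
      rw [Finset.mem_range] at hk
      have hsk := sin_xk_ne hn hk h0 hπ
      have inner : HasDerivAt (fun b : ℝ => (b + k * Real.pi) / n) (1/(n:ℝ)) β := by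
        simpa using ((hasDerivAt_id β).add_const ((k:ℝ) * Real.pi)).div_const (n:ℝ)
      exact (hasDerivAt_P_cot j hsk).comp β inner
    have hG : HasDerivAt (fun b => (n:ℝ) ^ (j+1) * (P j).eval (Real.cot b))
        ((n:ℝ) ^ (j+1) * (-(P (j+1)).eval (Real.cot β))) β :=
      (hasDerivAt_P_cot j hsin).const_mul _
    have heq : (fun b => ∑ k ∈ Finset.range n,
          (P j).eval (Real.cot ((b + k * Real.pi) / n)))
        =ᶠ[nhds β] (fun b => (n:ℝ) ^ (j+1) * (P j).eval (Real.cot b)) := by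
      filter_upwards [isOpen_Ioo.mem_nhds (Set.mem_Ioo.mpr ⟨h0, hπ⟩)] with b hb
      exact ih b hb.1 hb.2
    have hd := (hF.congr_of_eventuallyEq heq.symm).unique hG
    have hrw : ∑ k ∈ Finset.range n,
        -(P (j+1)).eval (Real.cot ((β + k * Real.pi) / n)) * (1/(n:ℝ))
        = -(∑ k ∈ Finset.range n,
            (P (j+1)).eval (Real.cot ((β + k * Real.pi) / n))) / n := by
      rw [neg_div, Finset.sum_div, ← Finset.sum_neg_distrib]
      apply Finset.sum_congr rfl
      intro k _
      ring
    rw [hrw] at hd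
    have hne : (n:ℝ) ≠ 0 := hnp.ne'
    field_simp at hd
    rw [show (n:ℝ) ^ (j + 1 + 1) = (n:ℝ) ^ (j+1) * n by ring]
    linarith [hd]

open Filter

lemma tendsto_inv_pow_nat (j : ℕ) (hj : 1 ≤ j) :
    Tendsto (fun n : ℕ => 1 / (n:ℝ) ^ j) atTop (nhds 0) := by
  have h : Tendsto (fun n : ℕ => ((n:ℝ)) ^ j) atTop atTop :=
    (tendsto_pow_atTop (by omega : j ≠ 0)).comp tendsto_natCast_atTop_atTop
  have := h.inv_tendsto_atTop
  simp only [one_div]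
  exact this

lemma main_limit (α : ℝ) (hα0 : 0 < α) (hαπ : α < Real.pi) :
    ∀ m : ℕ, 1 ≤ m →
      Tendsto (fun n : ℕ =>
        (1 / (n:ℝ) ^ m) * ∑ k ∈ Finset.range n, Real.cot ((α + k * Real.pi) / n) ^ m)
        atTop
        (nhds ((P (m-1)).eval (Real.cot α) / (Nat.factorial (m-1) : ℝ))) := by
  intro m
  induction m using Nat.strong_induction_on with
  | _ m IH =>
    intro hm
    rcases eq_or_lt_of_le hm with h1 | h2
    · -- m = 1
      have hm1 : m = 1 := h1.symm
      subst hm1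
      have h0 : Polynomial.eval (Real.cot α) (P 0) / ((Nat.factorial 0 : ℕ) : ℝ)
          = Real.cot α := by simp [P]
      rw [show (1:ℕ) - 1 = 0 from rfl, h0]
      apply Tendsto.congr' _ tendsto_const_nhds
      filter_upwards [eventually_ge_atTop 1] with n hn
      have hnp : (0:ℝ) < n := by exact_mod_cast hn
      have hkey := keyC n hn 0 α hα0 hαπ
      simp only [P, Polynomial.eval_X] at hkey
      simp only [pow_one]
      rw [hkey]
      field_simp
      rw [zero_add, pow_one]
    · -- m ≥ 2
      have hm0 : 0 < m := by omega
      have hm1' : m - 1 + 1 = m := by omega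
      obtain ⟨hPdeg, hPcoeff⟩ := P_deg_coeff (m - 1)
      rw [hm1'] at hPdeg hPcoeff
      set E : ℝ := (P (m-1)).eval (Real.cot α) with hEdef
      set Rp : Polynomial ℝ := P (m-1) - Polynomial.C ((Nat.factorial (m-1) : ℝ))
          * Polynomial.X ^ m with hRpdef
      have hRdeg : Rp.natDegree < m + 1 := by
        apply Nat.lt_succ_of_le
        apply le_trans (Polynomial.natDegree_sub_le _ _)
        apply max_le hPdeg
        apply le_trans (Polynomial.natDegree_C_mul_le _ _)
        exact le_of_eq (Polynomial.natDegree_X_pow m)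
      have hRm : Rp.coeff m = 0 := by
        rw [hRpdef, Polynomial.coeff_sub, Polynomial.coeff_C_mul, Polynomial.coeff_X_pow,
          if_pos rfl, mul_one, hPcoeff, sub_self]
      have heval : ∀ t : ℝ, Rp.eval t
          = ∑ i ∈ Finset.range m, Rp.coeff i * t ^ i := by
        intro t
        rw [Polynomial.eval_eq_sum_range' hRdeg, Finset.sum_range_succ, hRm, zero_mul,
          add_zero]
      -- each correction term tends to zero
      have hterm : ∀ i ∈ Finset.range m, Tendsto (fun n : ℕ =>
          Rp.coeff i * ((∑ k ∈ Finset.range n, Real.cot ((α + k * Real.pi) / n) ^ i)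
            / (n:ℝ) ^ m)) atTop (nhds 0) := by
        intro i hi
        rw [Finset.mem_range] at hi
        rcases Nat.eq_zero_or_pos i with hi0 | hi1
        · subst hi0
          have hz : Tendsto (fun n : ℕ => ((n:ℝ) / (n:ℝ) ^ m)) atTop (nhds 0) := by
            apply Tendsto.congr' _ (tendsto_inv_pow_nat (m-1) (by omega))
            filter_upwards [eventually_ge_atTop 1] with n hn
            have hnp : (0:ℝ) < n := by exact_mod_cast hn
            rw [show (n:ℝ) ^ m = (n:ℝ) ^ (m-1) * n by rw [← pow_succ]; congr 1; omega]
            field_simp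
          have := hz.const_mul (Rp.coeff 0)
          simpa using this
        · have hz := (IH i hi hi1).mul (tendsto_inv_pow_nat (m - i) (by omega))
          rw [mul_zero] at hz
          have := hz.const_mul (Rp.coeff i)
          rw [mul_zero] at this
          apply Tendsto.congr' _ this
          filter_upwards [eventually_ge_atTop 1] with n hn
          have hnp : (0:ℝ) < n := by exact_mod_cast hn
          rw [show (n:ℝ) ^ m = (n:ℝ) ^ i * (n:ℝ) ^ (m - i) by
            rw [← pow_add]; congr 1; omega]
          field_simp
          congr 1
          apply Finset.sum_congr rfl
          intro x _
          ring_nf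
      have hsum : Tendsto (fun n : ℕ => ∑ i ∈ Finset.range m,
          Rp.coeff i * ((∑ k ∈ Finset.range n, Real.cot ((α + k * Real.pi) / n) ^ i)
            / (n:ℝ) ^ m)) atTop (nhds 0) := by
        have := tendsto_finset_sum (Finset.range m) hterm
        simpa using this
      have hfinal : Tendsto (fun n : ℕ => (E - ∑ i ∈ Finset.range m,
          Rp.coeff i * ((∑ k ∈ Finset.range n, Real.cot ((α + k * Real.pi) / n) ^ i)
            / (n:ℝ) ^ m)) / (Nat.factorial (m-1) : ℝ)) atTop
          (nhds (E / (Nat.factorial (m-1) : ℝ))) := by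
        have := (tendsto_const_nhds (x := E)).sub hsum
        rw [sub_zero] at this
        exact this.div_const _
      apply Tendsto.congr' _ hfinal
      filter_upwards [eventually_ge_atTop 1] with n hn
      have hnp : (0:ℝ) < n := by exact_mod_cast hn
      have hnm : (n:ℝ) ^ m ≠ 0 := by positivity
      have hfac : (Nat.factorial (m-1) : ℝ) ≠ 0 := by
        exact_mod_cast (Nat.factorial_pos (m-1)).ne'
      have hkey := keyC n hn (m-1) α hα0 hαπ
      rw [hm1', ← hEdef] at hkey
      have hdecomp : ∀ k ∈ Finset.range n,
          (P (m-1)).eval (Real.cot ((α + k * Real.pi) / n))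
          = (Nat.factorial (m-1) : ℝ) * Real.cot ((α + k * Real.pi) / n) ^ m
            + ∑ i ∈ Finset.range m, Rp.coeff i * Real.cot ((α + k * Real.pi) / n) ^ i := by
        intro k _
        rw [← heval]
        rw [hRpdef]
        simp only [Polynomial.eval_sub, Polynomial.eval_mul, Polynomial.eval_C,
          Polynomial.eval_pow, Polynomial.eval_X]
        ring
      rw [Finset.sum_congr rfl hdecomp, Finset.sum_add_distrib, ← Finset.mul_sum,
        Finset.sum_comm] at hkey
      have hswap : ∀ i ∈ Finset.range m, ∑ k ∈ Finset.range n,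
          Rp.coeff i * Real.cot ((α + k * Real.pi) / n) ^ i
          = Rp.coeff i * ∑ k ∈ Finset.range n, Real.cot ((α + k * Real.pi) / n) ^ i :=
        fun i _ => (Finset.mul_sum _ _ _).symm
      rw [Finset.sum_congr rfl hswap] at hkey
      have hpull : (∑ i ∈ Finset.range m, Rp.coeff i
            * ((∑ k ∈ Finset.range n, Real.cot ((α + k * Real.pi) / n) ^ i) / (n:ℝ) ^ m))
          = (∑ i ∈ Finset.range m, Rp.coeff i
            * (∑ k ∈ Finset.range n, Real.cot ((α + k * Real.pi) / n) ^ i)) / (n:ℝ) ^ m := by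
        rw [Finset.sum_div]
        exact Finset.sum_congr rfl fun i _ => (mul_div_assoc _ _ _).symm
      rw [hpull]
      rw [show E = ((Nat.factorial (m-1) : ℝ)
            * (∑ k ∈ Finset.range n, Real.cot ((α + k * Real.pi) / n) ^ m)
            + (∑ i ∈ Finset.range m, Rp.coeff i
              * ∑ k ∈ Finset.range n, Real.cot ((α + k * Real.pi) / n) ^ i)) / (n:ℝ) ^ m
          from by rw [eq_div_iff hnm]; linear_combination -hkey]
      field_simp
      simp only [mul_comm _ Real.pi]
      ring


theorem stmt_18 (m : ℕ) (hm : 2 ≤ m) (α : ℝ) (hα0 : 0 < α) (hαπ : α < Real.pi) :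
    Tendsto
      (fun n : ℕ =>
        (1 / (n : ℝ) ^ m) * ∑ k ∈ Finset.range n, Real.cot ((α + k * Real.pi) / n) ^ m)
      atTop
      (nhds ((P (m - 1)).eval (Real.cot α) / (Nat.factorial (m - 1) : ℝ))) :=
  main_limit α hα0 hαπ m (by omega)
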